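/- Let Ω' ⊆ ℂ be open, and let r, α₁, α₂, β₁, β₂ : Ω' → ℂ where r is twice continuously differentiable (in the real sense), α₁ and α₂ are continuously differentiable, and r(z) ≠ 0 for every z ∈ Ω'. Assume in Ω': (i) 2 ∂_z̄ r = (α₁ − α₂) r; (ii) ∂_z̄² r = (β₁ − β₂) r − α₂ ∂_z̄ r; and (iii) 2β_j = ∂_z̄ α_j + α_j² for j = 1, 2. Then α₁² = α₂² everywhere in Ω'. -/

import Mathlib

/-- Wirtinger derivative `∂_z̄ w = (1/2)(∂w/∂x + i ∂w/∂y)`. -/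
noncomputable def dzbar (w : ℂ → ℂ) (z : ℂ) : ℂ :=
  (1 / 2 : ℂ) * (fderiv ℝ w z 1 + Complex.I * fderiv ℝ w z Complex.I)

lemma dzbar_congr {f g : ℂ → ℂ} {z : ℂ} (h : f =ᶠ[nhds z] g) :
    dzbar f z = dzbar g z := by
  unfold dzbar
  rw [h.fderiv_eq]

lemma dzbar_mul {f g : ℂ → ℂ} {z : ℂ} (hf : DifferentiableAt ℝ f z)
    (hg : DifferentiableAt ℝ g z) :
    dzbar (fun w => f w * g w) z = dzbar f z * g z + f z * dzbar g z := by
  unfold dzbar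
  rw [fderiv_fun_mul hf hg]
  simp only [ContinuousLinearMap.add_apply, ContinuousLinearMap.smul_apply, smul_eq_mul]
  ring

lemma dzbar_const_mul_sub {f g : ℂ → ℂ} {z : ℂ} (c : ℂ) (hf : DifferentiableAt ℝ f z)
    (hg : DifferentiableAt ℝ g z) :
    dzbar (fun w => c * (f w - g w)) z = c * (dzbar f z - dzbar g z) := by
  unfold dzbar
  rw [fderiv_const_mul (a := fun w => f w - g w) (hf.sub hg), fderiv_fun_sub hf hg]
  simp only [ContinuousLinearMap.smul_apply, ContinuousLinearMap.sub_apply, smul_eq_mul]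
  ring

/-- If `r` is `C²` and nonvanishing on an open `Ω' ⊆ ℂ`, `α₁, α₂` are
`C¹`, and (i) `2∂_z̄ r = (α₁-α₂)r`, (ii) `∂_z̄²r = (β₁-β₂)r - α₂ ∂_z̄ r`, and
(iii) `2β_j = ∂_z̄ α_j + α_j²` hold in `Ω'`, then `α₁² = α₂²` in `Ω'`. -/
theorem stmt_14 (Ω' : Set ℂ) (hΩopen : IsOpen Ω')
    (r α₁ α₂ β₁ β₂ : ℂ → ℂ)
    (hr : ContDiffOn ℝ 2 r Ω')
    (hα₁ : ContDiffOn ℝ 1 α₁ Ω') (hα₂ : ContDiffOn ℝ 1 α₂ Ω')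
    (hr0 : ∀ z ∈ Ω', r z ≠ 0)
    (h1 : ∀ z ∈ Ω', 2 * dzbar r z = (α₁ z - α₂ z) * r z)
    (h2 : ∀ z ∈ Ω', dzbar (dzbar r) z = (β₁ z - β₂ z) * r z - α₂ z * dzbar r z)
    (h3 : ∀ z ∈ Ω', 2 * β₁ z = dzbar α₁ z + (α₁ z) ^ 2)
    (h4 : ∀ z ∈ Ω', 2 * β₂ z = dzbar α₂ z + (α₂ z) ^ 2) :
    ∀ z ∈ Ω', (α₁ z) ^ 2 = (α₂ z) ^ 2 := by
  intro z hz
  have hnz : Ω' ∈ nhds z := hΩopen.mem_nhds hz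
  have hra : DifferentiableAt ℝ r z := (hr.contDiffAt hnz).differentiableAt two_ne_zero
  have ha1 : DifferentiableAt ℝ α₁ z := (hα₁.contDiffAt hnz).differentiableAt one_ne_zero
  have ha2 : DifferentiableAt ℝ α₂ z := (hα₂.contDiffAt hnz).differentiableAt one_ne_zero
  -- dzbar r agrees near z with (1/2)(α₁-α₂)·r
  have hEq : dzbar r =ᶠ[nhds z] fun w => ((1/2 : ℂ) * (α₁ w - α₂ w)) * r w := by
    filter_upwards [hnz] with w hw
    linear_combination (h1 w hw) / 2
  have hfd : DifferentiableAt ℝ (fun w => (1/2 : ℂ) * (α₁ w - α₂ w)) z :=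
    (ha1.sub ha2).const_mul _
  have key : dzbar (dzbar r) z
      = ((1/2 : ℂ) * (dzbar α₁ z - dzbar α₂ z)) * r z
        + ((1/2 : ℂ) * (α₁ z - α₂ z)) * dzbar r z := by
    rw [dzbar_congr hEq, dzbar_mul hfd hra, dzbar_const_mul_sub _ ha1 ha2]
  have E := h2 z hz
  rw [key] at E
  have h1z := h1 z hz
  have h3z := h3 z hz
  have h4z := h4 z hz
  have hR : r z ≠ 0 := hr0 z hz
  have goal' : (α₁ z) ^ 2 * r z = (α₂ z) ^ 2 * r z := by
    linear_combination (-4 : ℂ) * E + (α₁ z + α₂ z) * h1z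
      - (2 * r z) * h3z + (2 * r z) * h4z
  exact mul_right_cancel₀ hR goal'
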